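/- Let (ν_k)_{k=1}^K be real numbers with ∑_k ν_k² = 1 and let θ_k ∈ (0, π/2] for each k. If T is a natural number with T + 1 ≥ 100 ∑_k ν_k²/θ_k, then (1/(T+1)) ∑_{t=0}^{T} ∑_k ν_k² cos(2θ_k t) ≤ 1/25. -/

import Mathlib

open Real


lemma cos_geom_bound (θ : ℝ) (h0 : 0 < θ) (h1 : θ ≤ π / 2) (n : ℕ) :
    ∑ t ∈ Finset.range n, Real.cos (2 * θ * t) ≤ 1 / Real.sin θ := by
  have hs : 0 < Real.sin θ := Real.sin_pos_of_pos_of_lt_pi h0 (lt_of_le_of_lt h1 (by linarith [Real.pi_pos]))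
  set z : ℂ := Complex.exp ((2 * θ : ℝ) * Complex.I) with hz
  have hzt : ∀ t : ℕ, z ^ t = Complex.exp (((2 * θ * t : ℝ)) * Complex.I) := by
    intro t
    rw [hz, ← Complex.exp_nat_mul]
    congr 1
    push_cast
    ring
  have hre : ∀ t : ℕ, (z ^ t).re = Real.cos (2 * θ * t) := by
    intro t
    rw [hzt t, Complex.exp_ofReal_mul_I_re]
  have hsum : ∑ t ∈ Finset.range n, Real.cos (2 * θ * t)
      = (∑ t ∈ Finset.range n, z ^ t).re := by
    rw [Complex.re_sum]
    exact Finset.sum_congr rfl fun t _ => (hre t).symm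
  -- |z - 1| = 2 sin θ
  have habs1 : ‖z - 1‖ = 2 * Real.sin θ := by
    have : z = Real.cos (2*θ) + Real.sin (2*θ) * Complex.I := by
      rw [hz, Complex.exp_mul_I, ← Complex.ofReal_cos, ← Complex.ofReal_sin]
    rw [this]
    have h2 : ‖(↑(Real.cos (2*θ)) + ↑(Real.sin (2*θ)) * Complex.I - 1 : ℂ)‖
        = Real.sqrt ((Real.cos (2*θ) - 1)^2 + (Real.sin (2*θ))^2) := by
      rw [Complex.norm_def, Complex.normSq_apply]
      congr 1
      simp only [Complex.add_re, Complex.sub_re, Complex.add_im, Complex.sub_im, Complex.mul_re,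
        Complex.mul_im, Complex.ofReal_re, Complex.ofReal_im, Complex.I_re, Complex.I_im,
        Complex.one_re, Complex.one_im]
      ring
    rw [h2]
    have : (Real.cos (2*θ) - 1)^2 + (Real.sin (2*θ))^2 = (2 * Real.sin θ)^2 := by
      have hc : Real.cos (2*θ) = 1 - 2 * Real.sin θ ^ 2 := by
        rw [Real.cos_two_mul, ← Real.sin_sq_add_cos_sq θ]; ring
      have hp := Real.sin_sq_add_cos_sq (2*θ)
      nlinarith
    rw [this, Real.sqrt_sq (by positivity)]
  have hz1 : z ≠ 1 := by
    intro h
    rw [h] at habs1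
    simp at habs1
    linarith
  have hgeom : ∑ t ∈ Finset.range n, z ^ t = (z ^ n - 1) / (z - 1) :=
    geom_sum_eq hz1 n
  have habszn : ‖z ^ n‖ = 1 := by
    rw [norm_pow, hz, Complex.norm_exp_ofReal_mul_I, one_pow]
  have hbound : ‖∑ t ∈ Finset.range n, z ^ t‖ ≤ 1 / Real.sin θ := by
    rw [hgeom, norm_div, habs1]
    have : ‖z ^ n - 1‖ ≤ 2 := by
      have h3 : ‖z ^ n - 1‖ ≤ ‖z ^ n‖ + ‖(1:ℂ)‖ := by
        simpa [sub_eq_add_neg] using norm_add_le (z ^ n) (-1)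
      rw [habszn] at h3
      norm_num at h3
      exact h3
    rw [div_le_div_iff₀ (by linarith) hs]
    calc ‖z^n - 1‖ * Real.sin θ ≤ 2 * Real.sin θ := by nlinarith [norm_nonneg (z^n-1)]
      _ = 1 * (2 * Real.sin θ) := by ring
  calc ∑ t ∈ Finset.range n, Real.cos (2 * θ * t) = (∑ t ∈ Finset.range n, z ^ t).re := hsum
    _ ≤ ‖∑ t ∈ Finset.range n, z ^ t‖ := Complex.re_le_norm _
    _ ≤ 1 / Real.sin θ := hbound

/-- If `∑_k ν_k² = 1`, each `θ_k ∈ (0, π/2]`, and `T + 1 ≥ 100 ∑_k ν_k²/θ_k`, then the average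
overlap `(1/(T+1)) ∑_{t=0}^{T} ∑_k ν_k² cos(2 θ_k t)` is at most `1/25`. -/
theorem stmt_14 {K : ℕ} (ν θ : Fin K → ℝ)
    (hν : ∑ k, ν k ^ 2 = 1)
    (hθ : ∀ k, θ k ∈ Set.Ioc (0 : ℝ) (Real.pi / 2))
    (T : ℕ) (hT : (T : ℝ) + 1 ≥ 100 * ∑ k, ν k ^ 2 / θ k) :
    (1 / ((T : ℝ) + 1)) * ∑ t ∈ Finset.range (T + 1), ∑ k, ν k ^ 2 * Real.cos (2 * θ k * t)
      ≤ 1 / 25 := by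
  have hT1 : (0:ℝ) < (T:ℝ) + 1 := by positivity
  have hπ := Real.pi_pos
  have hk : ∀ k, ∑ t ∈ Finset.range (T+1), ν k ^ 2 * Real.cos (2 * θ k * t)
      ≤ ν k ^ 2 * (π / 2 * (1 / θ k)) := by
    intro k
    obtain ⟨h0, h1⟩ := hθ k
    rw [← Finset.mul_sum]
    have hb := cos_geom_bound (θ k) h0 h1 (T+1)
    have hsin : 2 / π * θ k ≤ Real.sin (θ k) := Real.mul_le_sin h0.le h1
    have hspos : 0 < Real.sin (θ k) :=
      Real.sin_pos_of_pos_of_lt_pi h0 (lt_of_le_of_lt h1 (by linarith))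
    have hfin : 1 / Real.sin (θ k) ≤ π / 2 * (1 / θ k) := by
      rw [div_le_iff₀ hspos]
      have h2 : (0:ℝ) < π / 2 * (1 / θ k) := by positivity
      have h3 : π / 2 * (1 / θ k) * (2 / π * θ k) ≤ π / 2 * (1 / θ k) * Real.sin (θ k) :=
        mul_le_mul_of_nonneg_left hsin h2.le
      have h4 : π / 2 * (1 / θ k) * (2 / π * θ k) = 1 := by
        field_simp
      linarith
    nlinarith [sq_nonneg (ν k)]
  have hsum : ∑ k, ∑ t ∈ Finset.range (T+1), ν k ^ 2 * Real.cos (2 * θ k * t)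
      ≤ π / 2 * ∑ k, ν k ^ 2 / θ k := by
    rw [Finset.mul_sum]
    refine Finset.sum_le_sum fun k _ => (hk k).trans_eq ?_
    ring
  have hS0 : 0 ≤ ∑ k, ν k ^ 2 / θ k :=
    Finset.sum_nonneg fun k _ => div_nonneg (sq_nonneg _) (hθ k).1.le
  calc (1 / ((T : ℝ) + 1)) * ∑ t ∈ Finset.range (T + 1), ∑ k, ν k ^ 2 * Real.cos (2 * θ k * t)
      = (1 / ((T : ℝ) + 1)) * ∑ k, ∑ t ∈ Finset.range (T+1), ν k ^ 2 * Real.cos (2 * θ k * t) := by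
        rw [Finset.sum_comm]
    _ ≤ (1 / ((T : ℝ) + 1)) * (π / 2 * ∑ k, ν k ^ 2 / θ k) := by
        apply mul_le_mul_of_nonneg_left hsum (by positivity)
    _ ≤ (1 / ((T : ℝ) + 1)) * (((T:ℝ) + 1) / 50) := by
        apply mul_le_mul_of_nonneg_left _ (by positivity)
        have hpi4 := Real.pi_le_four
        nlinarith
    _ = 1 / 50 := by field_simp
    _ ≤ 1 / 25 := by norm_num
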